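/- Let M be a nonempty smooth manifold and let I be a proper ideal of R = C^∞(M,ℝ) with dim_ℝ(R/I) = d finite. Then spec(I) is a nonempty finite set with at most d elements. -/

import Mathlib

open scoped Manifold
open Module Filter Topology

noncomputable section

/-- The ℝ-algebra of smooth real-valued functions on a manifold `M` modelled on `ℝ^m`. -/
abbrev SmoothFns (m : ℕ) (M : Type*) [TopologicalSpace M]
    [ChartedSpace (EuclideanSpace ℝ (Fin m)) M] : Type _ :=
  C^(⊤ : ℕ∞)⟮𝓡 m, M; 𝓘(ℝ, ℝ), ℝ⟯

variable {m : ℕ} {M : Type*} [TopologicalSpace M] [T2Space M] [SecondCountableTopology M]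
  [ChartedSpace (EuclideanSpace ℝ (Fin m)) M] [IsManifold (𝓡 m) (⊤ : ℕ∞) M]

/-- The ideal `𝔪ₓ` of smooth functions vanishing at the point `x`. -/
def mIdeal (x : M) : Ideal (SmoothFns m M) where
  carrier := {f | f x = 0}
  add_mem' := by intro f g hf hg; simp_all
  zero_mem' := by simp
  smul_mem' := by intro c f hf; simp_all

/-- The ideal `𝔫ₓ` of smooth functions vanishing on some neighbourhood of the point `x`. -/
def nIdeal (x : M) : Ideal (SmoothFns m M) where
  carrier := {f | ∀ᶠ y in 𝓝 x, f y = 0}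
  add_mem' := by
    intro f g hf hg
    filter_upwards [hf, hg] with y h1 h2
    simp [h1, h2]
  zero_mem' := by filter_upwards with y; simp
  smul_mem' := by
    intro c f hf
    filter_upwards [hf] with y h
    simp [h]

/-- The spectrum of an ideal: the set of common zeros of its elements. -/
def idealSpec (I : Ideal (SmoothFns m M)) : Set M :=
  {x : M | ∀ f ∈ I, f x = 0}

set_option linter.unusedSectionVars false

/-- Sum of smooth functions evaluated pointwise. -/
lemma smoothFns_sum_apply {ι : Type*} (t : Finset ι) (F : ι → SmoothFns m M) (x : M) :
    (∑ i ∈ t, F i) x = ∑ i ∈ t, F i x := by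
  have := map_sum (ContMDiffMap.coeFnAddMonoidHom :
      SmoothFns m M →+ (M → ℝ)) F t
  calc (∑ i ∈ t, F i) x = (ContMDiffMap.coeFnAddMonoidHom (∑ i ∈ t, F i) : M → ℝ) x := rfl
    _ = ∑ i ∈ t, F i x := by rw [this, Finset.sum_apply]; rfl

/-- Existence of a smooth exhaustion function. -/
lemma smoothFns_exists_exhaustion :
    ∃ (h : SmoothFns m M) (K : CompactExhaustion M),
      (∀ x, 0 ≤ h x) ∧ ∀ (n : ℕ) (x : M), x ∉ K (n + 1) → (n + 1 : ℝ) ≤ h x := by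
  have hLC : LocallyCompactSpace M := Manifold.locallyCompact_of_finiteDimensional (𝓡 m)
  have hSC : SigmaCompactSpace M := inferInstance
  let K : CompactExhaustion M := CompactExhaustion.choice M
  have hfex : ∀ n : ℕ, ∃ f : SmoothFns m M,
      Set.EqOn f 0 (K n) ∧ Set.EqOn f 1 (interior (K (n + 1)))ᶜ ∧
        ∀ x, f x ∈ Set.Icc (0 : ℝ) 1 := by
    intro n
    refine exists_contMDiffMap_zero_one_of_isClosed (𝓡 m) (K.isCompact n).isClosed
      isOpen_interior.isClosed_compl ?_
    rw [Set.disjoint_compl_right_iff_subset]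
    exact K.subset_interior_succ n
  choose f hf0 hf1 hf01 using hfex
  have hloc : ∀ (N : ℕ) (y : M), y ∈ K N →
      (∑ᶠ n, f n y) = ∑ n ∈ Finset.range N, f n y := by
    intro N y hy
    refine finsum_eq_sum_of_support_subset _ ?_
    intro n hn
    simp only [Finset.coe_range, Set.mem_Iio]
    by_contra hnN
    exact hn (hf0 n (K.subset (le_of_not_gt hnN) hy))
  have hsmooth : ContMDiff (𝓡 m) 𝓘(ℝ, ℝ) ((⊤ : ℕ∞) : WithTop ℕ∞) (fun x => ∑ᶠ n, f n x) := by
    intro x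
    have hx : x ∈ interior (K (K.find x + 1)) :=
      K.subset_interior_succ _ (K.mem_find x)
    have heq : (fun y => ∑ᶠ n, f n y) =ᶠ[𝓝 x]
        fun y => ∑ n ∈ Finset.range (K.find x + 1), f n y := by
      filter_upwards [isOpen_interior.mem_nhds hx] with y hy
      exact hloc _ y (interior_subset hy)
    have hsum : ContMDiffAt (𝓡 m) 𝓘(ℝ, ℝ) ((⊤ : ℕ∞) : WithTop ℕ∞)
        (fun y => ∑ n ∈ Finset.range (K.find x + 1), f n y) x :=
      (contMDiff_finset_sum (fun i _ => (f i).contMDiff)).contMDiffAt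
    exact hsum.congr_of_eventuallyEq heq
  refine ⟨⟨fun x => ∑ᶠ n, f n x, hsmooth⟩, K, ?_, ?_⟩
  · intro x
    have hx : x ∈ K (K.find x) := K.mem_find x
    simp only [ContMDiffMap.coeFn_mk]
    rw [hloc _ x hx]
    exact Finset.sum_nonneg fun i _ => (hf01 i x).1
  · intro n x hx
    have hxK : x ∈ K (max (n + 1) (K.find x)) :=
      K.subset (le_max_right _ _) (K.mem_find x)
    simp only [ContMDiffMap.coeFn_mk]
    rw [hloc _ x hxK]
    have h1 : ∀ k ∈ Finset.range (n + 1), f k x = 1 := by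
      intro k hk
      refine hf1 k fun hmem => hx ?_
      exact K.subset (Nat.succ_le_succ (Nat.lt_succ_iff.1 (Finset.mem_range.1 hk)))
        (interior_subset hmem)
    calc ((n : ℝ) + 1) = ∑ k ∈ Finset.range (n + 1), f k x := by
          rw [Finset.sum_congr rfl h1]; simp
      _ ≤ ∑ k ∈ Finset.range (max (n + 1) (K.find x)), f k x :=
          Finset.sum_le_sum_of_subset_of_nonneg
            (Finset.range_subset_range.2 (le_max_left _ _)) fun i _ _ => (hf01 i x).1

/-- Any finite subset of the spectrum has cardinality at most the codimension. -/
lemma smoothFns_card_le (I : Ideal (SmoothFns m M))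
    [FiniteDimensional ℝ (SmoothFns m M ⧸ I)]
    (s : Finset M) (hs : ↑s ⊆ idealSpec I) :
    s.card ≤ finrank ℝ (SmoothFns m M ⧸ I) := by
  have hLC : LocallyCompactSpace M := Manifold.locallyCompact_of_finiteDimensional (𝓡 m)
  have hSC : SigmaCompactSpace M := inferInstance
  have hgex : ∀ x : s, ∃ g : SmoothFns m M, g x = 1 ∧ ∀ y ∈ s, y ≠ (x : M) → g y = 0 := by
    rintro ⟨x, hx⟩
    obtain ⟨g, hg0, hg1, -⟩ := exists_contMDiffMap_zero_one_of_isClosed (𝓡 m)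
      (s := (↑s \ {x} : Set M)) (t := {x})
      (((s.finite_toSet).diff).isClosed) isClosed_singleton
      (Set.disjoint_singleton_right.2 fun h => h.2 rfl)
    exact ⟨g, hg1 rfl, fun y hy hyx => hg0 ⟨hy, hyx⟩⟩
  choose g hg1 hg0 using hgex
  have hli : LinearIndependent ℝ fun x : s => Ideal.Quotient.mkₐ ℝ I (g x) := by
    rw [Fintype.linearIndependent_iff]
    intro c hc i
    have hmem : (∑ x : s, c x • g x) ∈ I := by
      rw [← Ideal.Quotient.eq_zero_iff_mem, ← Ideal.Quotient.mkₐ_eq_mk ℝ, map_sum]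
      simpa only [map_smul] using hc
    have hval := hs i.2 _ hmem
    rw [smoothFns_sum_apply] at hval
    have hz : ∀ x : s, x ≠ i → c x • (g x : SmoothFns m M) (i : M) = 0 := by
      intro x hxi
      rw [hg0 x i i.2 fun h => hxi (Subtype.ext h.symm)]
      simp
    simp only [ContMDiffMap.coe_smul, Pi.smul_apply] at hval
    rw [Fintype.sum_eq_single i (fun x hxi => hz x hxi)] at hval
    simpa [hg1] using hval
  simpa using hli.fintype_card_le_finrank

/-- For a nonempty smooth manifold `M` and a proper ideal `I` of
`R = C^∞(M,ℝ)` with `dim_ℝ(R/I) = d` finite, the spectrum of `I` is a nonempty finite set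
with at most `d` elements. -/
theorem spec_nonempty_finite_card_le
    [Nonempty M] (I : Ideal (SmoothFns m M)) (hI : I ≠ ⊤) (d : ℕ)
    (hfd : FiniteDimensional ℝ (SmoothFns m M ⧸ I))
    (hd : Module.finrank ℝ (SmoothFns m M ⧸ I) = d) :
    (idealSpec I).Nonempty ∧ (idealSpec I).Finite ∧ (idealSpec I).ncard ≤ d := by
  classical
  have hcard : ∀ s : Finset M, ↑s ⊆ idealSpec I → s.card ≤ d := by
    intro s hs; rw [← hd]; exact smoothFns_card_le I s hs
  have hfin : (idealSpec I).Finite := by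
    by_contra hinf
    obtain ⟨t, hts, htc⟩ := (Set.not_infinite.not_right.2 hinf : (idealSpec I).Infinite).exists_subset_card_eq (d + 1)
    have := hcard t hts
    omega
  have hncard : (idealSpec I).ncard ≤ d := by
    have h1 := hcard hfin.toFinset (by simp)
    rwa [Set.ncard_eq_toFinset_card _ hfin]
  refine ⟨?_, hfin, hncard⟩
  by_contra hne
  rw [Set.not_nonempty_iff_eq_empty] at hne
  have hex : ∀ x : M, ∃ f, f ∈ I ∧ f x ≠ 0 := by
    intro x
    by_contra h; push_neg at h
    have hx : x ∈ idealSpec I := fun f hf => h f hf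
    rw [hne] at hx
    exact Set.notMem_empty x hx
  choose F hFI hFx using hex
  obtain ⟨Hh, K, hH0, hHb⟩ := smoothFns_exists_exhaustion (m := m) (M := M)
  have hdep : ¬ LinearIndependent ℝ
      (fun i : Fin (d + 1) => Ideal.Quotient.mkₐ ℝ I (Hh ^ (i : ℕ))) := by
    intro hli
    have := hli.fintype_card_le_finrank
    rw [hd] at this
    simp at this
  obtain ⟨c, hcsum, i₀, hc0⟩ := Fintype.not_linearIndependent_iff.1 hdep
  set g : SmoothFns m M := ∑ i : Fin (d + 1), c i • Hh ^ (i : ℕ) with hg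
  have hgI : g ∈ I := by
    rw [← Ideal.Quotient.eq_zero_iff_mem, ← Ideal.Quotient.mkₐ_eq_mk ℝ, hg, map_sum]
    simpa only [map_smul] using hcsum
  set q : Polynomial ℝ := ∑ i : Fin (d + 1), Polynomial.C (c i) * Polynomial.X ^ (i : ℕ)
    with hq
  have hq0 : q ≠ 0 := by
    intro h
    apply hc0
    have hcoeff : q.coeff (i₀ : ℕ) = c i₀ := by
      rw [hq, Polynomial.finset_sum_coeff, Finset.sum_eq_single i₀]
      · simp [Polynomial.coeff_C_mul, Polynomial.coeff_X_pow]
      · intro b _ hb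
        rw [Polynomial.coeff_C_mul, Polynomial.coeff_X_pow,
          if_neg fun hh => hb (Fin.val_injective hh.symm), mul_zero]
      · simp
    rw [h] at hcoeff
    simpa using hcoeff.symm
  have hgeval : ∀ x : M, g x = q.eval (Hh x) := by
    intro x
    rw [hg, smoothFns_sum_apply, hq, Polynomial.eval_finset_sum]
    simp
  obtain ⟨C, hC⟩ := q.exists_max_root hq0
  set Z : Set M := {x | g x = 0} with hZ
  have hZsub : Z ⊆ K (⌈C⌉₊ + 1) := by
    intro x hx
    by_contra hxK
    have h1 : ((⌈C⌉₊ : ℕ) : ℝ) + 1 ≤ Hh x := hHb _ x hxK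
    have h2 : Hh x ≤ C := hC _ (by rw [Polynomial.IsRoot, ← hgeval]; exact hx)
    have h3 := Nat.le_ceil C
    linarith
  have hZcl : IsClosed Z := by
    have hZeq : Z = ⇑g ⁻¹' {0} := by ext x; simp [hZ]
    rw [hZeq]
    exact isClosed_singleton.preimage g.contMDiff.continuous
  have hZcomp : IsCompact Z := (K.isCompact _).of_isClosed_subset hZcl hZsub
  have hUopen : ∀ z : M, IsOpen {y | F z y ≠ 0} := by
    intro z
    have : {y | F z y ≠ 0} = ⇑(F z) ⁻¹' ({0}ᶜ) := rfl
    rw [this]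
    exact isClosed_singleton.isOpen_compl.preimage (F z).contMDiff.continuous
  obtain ⟨t, ht⟩ := hZcomp.elim_finite_subcover (fun z => {y | F z y ≠ 0}) hUopen
    (fun z hz => Set.mem_iUnion.2 ⟨z, hFx z⟩)
  set G : SmoothFns m M := g ^ 2 + ∑ z ∈ t, F z ^ 2 with hG
  have hGI : G ∈ I := by
    refine I.add_mem ?_ (Ideal.sum_mem _ fun z _ => ?_)
    · rw [sq]; exact I.mul_mem_left _ hgI
    · rw [sq]; exact I.mul_mem_left _ (hFI z)
  have hGpos : ∀ x, G x ≠ 0 := by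
    intro x
    have hGx : G x = g x ^ 2 + ∑ z ∈ t, F z x ^ 2 := by
      rw [hG]
      simp [smoothFns_sum_apply]
    have hsumnn : 0 ≤ ∑ z ∈ t, F z x ^ 2 := Finset.sum_nonneg fun z _ => sq_nonneg _
    rcases eq_or_ne (g x) 0 with hgx | hgx
    · have hxZ : x ∈ Z := hgx
      obtain ⟨z, hzt, hz⟩ := Set.mem_iUnion₂.1 (ht hxZ)
      have hpos : 0 < ∑ z ∈ t, F z x ^ 2 :=
        Finset.sum_pos' (fun z _ => sq_nonneg _) ⟨z, hzt, by have := sq_nonneg (F z x); have h2 : F z x ^ 2 ≠ 0 := pow_ne_zero _ hz; positivity⟩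
      have := sq_nonneg (g x)
      rw [hGx]
      nlinarith
    · have : 0 < g x ^ 2 := by positivity
      rw [hGx]
      nlinarith
  have hsm : ContMDiff (𝓡 m) 𝓘(ℝ, ℝ) ((⊤ : ℕ∞) : WithTop ℕ∞) fun x => (G x)⁻¹ := G.contMDiff.inv₀ hGpos
  have hone : (1 : SmoothFns m M) ∈ I := by
    have hmul : G * ⟨fun x => (G x)⁻¹, hsm⟩ = 1 := by
      ext x
      exact mul_inv_cancel₀ (hGpos x)
    rw [← hmul]
    exact I.mul_mem_right _ hGI
  exact hI ((Ideal.eq_top_iff_one I).2 hone)
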